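/- arXiv:1809.04464 — 3 statements merged into one kernel-verified Lean document; each statement's English description precedes it below -/
import Mathlib

section
/- Let b ∈ (0,∞) and let Z_1, …, Z_N be independent real-valued random variables on a probability space, each taking values in the interval [−b, b]. Then for every μ > 0 there exists a real number α with 0 < α ≤ min{1, (b/2)·e^{−2b}} such that P( (1/N)·Σ_{i=1}^N (Z_i − E[Z_i]) ≥ μ ) ≤ exp( −(α·μ + α²·b²)·N ). -/
open MeasureTheory ProbabilityTheory

/-- Hoeffding's lemma: if `|Y| ≤ c` and `E[Y] = 0`, then `mgf Y P t ≤ exp (t^2 * c^2 / 2)`. -/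
lemma hoeffding_aux {Ω : Type*} [MeasurableSpace Ω] (P : Measure Ω) [IsProbabilityMeasure P]
    (Y : Ω → ℝ) (c : ℝ) (hc : 0 < c) (hY : Measurable Y) (hbd : ∀ ω, |Y ω| ≤ c)
    (hmean : ∫ ω, Y ω ∂P = 0) (t : ℝ) :
    mgf Y P t ≤ Real.exp (t ^ 2 * c ^ 2 / 2) := by
  have hYint : Integrable Y P :=
    ⟨hY.aestronglyMeasurable, (HasFiniteIntegral.of_bounded (C := c) (ae_of_all _ hbd))⟩
  -- pointwise convexity bound
  have hpt : ∀ ω, Real.exp (t * Y ω) ≤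
      (c - Y ω) / (2 * c) * Real.exp (-(t * c)) + (c + Y ω) / (2 * c) * Real.exp (t * c) := by
    intro ω
    have h1 : 0 ≤ (c - Y ω) / (2 * c) := by
      have h := (abs_le.1 (hbd ω)).2
      exact div_nonneg (by linarith) (by positivity)
    have h2 : 0 ≤ (c + Y ω) / (2 * c) := by
      have h := (abs_le.1 (hbd ω)).1
      exact div_nonneg (by linarith) (by positivity)
    have hsum : (c - Y ω) / (2 * c) + (c + Y ω) / (2 * c) = 1 := by
      field_simp; ring
    have h := convexOn_exp.2 (Set.mem_univ (-(t * c))) (Set.mem_univ (t * c)) h1 h2 hsum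
    simp only [smul_eq_mul] at h
    have harg : (c - Y ω) / (2 * c) * (-(t * c)) + (c + Y ω) / (2 * c) * (t * c) = t * Y ω := by
      rw [div_mul_eq_mul_div, div_mul_eq_mul_div, ← add_div,
        div_eq_iff (by positivity : (0 : ℝ) < 2 * c).ne']
      ring
    rw [harg] at h
    exact h
  have hint : Integrable (fun ω => Real.exp (t * Y ω)) P := by
    refine ⟨((hY.const_mul t).exp).aestronglyMeasurable,
      HasFiniteIntegral.of_bounded (C := Real.exp (|t| * c)) (ae_of_all _ fun ω => ?_)⟩
    rw [Real.norm_eq_abs, abs_of_pos (Real.exp_pos _)]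
    apply Real.exp_le_exp.2
    calc t * Y ω ≤ |t * Y ω| := le_abs_self _
      _ = |t| * |Y ω| := abs_mul _ _
      _ ≤ |t| * c := by gcongr; exact hbd ω
  have hrhsint : Integrable (fun ω =>
      (c - Y ω) / (2 * c) * Real.exp (-(t * c)) + (c + Y ω) / (2 * c) * Real.exp (t * c)) P := by
    apply Integrable.add
    · exact (((integrable_const c).sub hYint).div_const _).mul_const _
    · exact (((integrable_const c).add hYint).div_const _).mul_const _
  calc mgf Y P t = ∫ ω, Real.exp (t * Y ω) ∂P := rfl
    _ ≤ ∫ ω, ((c - Y ω) / (2 * c) * Real.exp (-(t * c)) +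
          (c + Y ω) / (2 * c) * Real.exp (t * c)) ∂P :=
        integral_mono hint hrhsint hpt
    _ = Real.cosh (t * c) := by
        have hptw : ∀ ω, (c - Y ω) / (2 * c) * Real.exp (-(t * c)) +
            (c + Y ω) / (2 * c) * Real.exp (t * c) =
            (Real.exp (t * c) + Real.exp (-(t * c))) / 2 +
            Y ω * ((Real.exp (t * c) - Real.exp (-(t * c))) / (2 * c)) := by
          intro ω
          field_simp
          ring
        simp_rw [hptw]
        rw [integral_add (integrable_const _) (hYint.mul_const _), integral_const,
          integral_mul_const, hmean, Real.cosh_eq]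
        simp
    _ ≤ Real.exp ((t * c) ^ 2 / 2) := Real.cosh_le_exp_half_sq _
    _ = Real.exp (t ^ 2 * c ^ 2 / 2) := by ring_nf

/-- Bernstein-type inequality, Lemma from Ahlswede 1980:
For independent random variables `Z i` taking values in `[-b, b]`, for every `μ > 0`
there exists `α` with `0 < α ≤ min {1, (b/2)·e^{-2b}}` such that
`P((1/N)·Σ (Z i - E[Z i]) ≥ μ) ≤ exp(-(αμ + α²b²)·N)`. -/
theorem stmt0
    {Ω : Type*} [MeasurableSpace Ω] (P : Measure Ω) [IsProbabilityMeasure P]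
    (b : ℝ) (hb : 0 < b) (N : ℕ) (hN : 0 < N)
    (Z : Fin N → Ω → ℝ)
    (hmeas : ∀ i, Measurable (Z i))
    (hindep : iIndepFun Z P)
    (hbdd : ∀ i ω, Z i ω ∈ Set.Icc (-b) b) :
    ∀ μ : ℝ, 0 < μ →
      ∃ α : ℝ, 0 < α ∧ α ≤ min 1 (b / 2 * Real.exp (-2 * b)) ∧
        P {ω | μ ≤ (1 / (N : ℝ)) * ∑ i, (Z i ω - ∫ ω', Z i ω' ∂P)} ≤
          ENNReal.ofReal (Real.exp (-(α * μ + α ^ 2 * b ^ 2) * N)) := by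
  intro μ hμ
  set α : ℝ := min (min 1 (b / 2 * Real.exp (-2 * b))) (μ / (9 * b ^ 2)) with hα
  have hα_pos : 0 < α := by
    apply lt_min (lt_min one_pos (by positivity)) (by positivity)
  refine ⟨α, hα_pos, min_le_left _ _, ?_⟩
  -- centered variables
  set Y : Fin N → Ω → ℝ := fun i ω => Z i ω - ∫ ω', Z i ω' ∂P with hY
  have hYmeas : ∀ i, Measurable (Y i) := fun i => (hmeas i).sub measurable_const
  have hZint : ∀ i, Integrable (Z i) P := fun i =>
    ⟨(hmeas i).aestronglyMeasurable, HasFiniteIntegral.of_bounded (C := b)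
      (ae_of_all _ fun ω => abs_le.2 ⟨(hbdd i ω).1, (hbdd i ω).2⟩)⟩
  have hEbd : ∀ i, |∫ ω', Z i ω' ∂P| ≤ b := by
    intro i
    calc |∫ ω', Z i ω' ∂P| ≤ ∫ ω', |Z i ω'| ∂P := by
          simpa [Real.norm_eq_abs] using norm_integral_le_integral_norm (μ := P) (Z i)
      _ ≤ ∫ _ω', b ∂P := integral_mono (hZint i).abs (integrable_const b)
          (fun ω => abs_le.2 ⟨(hbdd i ω).1, (hbdd i ω).2⟩)
      _ = b := by simp
  have hYbd : ∀ i ω, |Y i ω| ≤ 2 * b := by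
    intro i ω
    have h1 := abs_le.1 (hEbd i)
    have h2 := hbdd i ω
    simp only [hY]
    rw [abs_le]
    constructor <;> [linarith [h2.1]; linarith [h2.2]]
  have hYmean : ∀ i, ∫ ω, Y i ω ∂P = 0 := by
    intro i
    simp only [hY]
    rw [integral_sub (hZint i) (integrable_const _), integral_const]
    simp
  have hYindep : iIndepFun Y P := by
    have := hindep.comp (g := fun i (x : ℝ) => x - ∫ ω', Z i ω' ∂P)
      (fun i => measurable_id.sub measurable_const)
    exact this
  -- mgf bound for each Y i at t = 2α
  have hmgf : ∀ i, mgf (Y i) P (2 * α) ≤ Real.exp ((2 * α) ^ 2 * (2 * b) ^ 2 / 2) := fun i =>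
    hoeffding_aux P (Y i) (2 * b) (by positivity) (hYmeas i) (hYbd i) (hYmean i) _
  have hint : ∀ i, Integrable (fun ω => Real.exp (2 * α * Y i ω)) P := by
    intro i
    refine ⟨((hYmeas i).const_mul _).exp.aestronglyMeasurable,
      HasFiniteIntegral.of_bounded (C := Real.exp (2 * α * (2 * b))) (ae_of_all _ fun ω => ?_)⟩
    rw [Real.norm_eq_abs, abs_of_pos (Real.exp_pos _)]
    apply Real.exp_le_exp.2
    have := (abs_le.1 (hYbd i ω)).2
    nlinarith
  have hSint : Integrable (fun ω => Real.exp (2 * α * (∑ i, Y i) ω)) P :=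
    hYindep.integrable_exp_mul_sum hYmeas (fun i _ => hint i)
  -- event rewriting
  have hNpos : (0 : ℝ) < N := Nat.cast_pos.2 hN
  have hevent : {ω | μ ≤ (1 / (N : ℝ)) * ∑ i, (Z i ω - ∫ ω', Z i ω' ∂P)} =
      {ω | (N : ℝ) * μ ≤ (∑ i, Y i) ω} := by
    ext ω
    simp only [Set.mem_setOf_eq, Finset.sum_apply, hY]
    rw [one_div, inv_mul_eq_div, le_div_iff₀ hNpos, mul_comm μ]
  rw [hevent]
  -- Chernoff
  have hchern := measure_ge_le_exp_mul_mgf (μ := P) (X := ∑ i, Y i) ((N : ℝ) * μ)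
    (t := 2 * α) (by positivity) hSint
  rw [hYindep.mgf_sum hYmeas] at hchern
  have hprod : ∏ i : Fin N, mgf (Y i) P (2 * α) ≤
      Real.exp ((2 * α) ^ 2 * (2 * b) ^ 2 / 2 * N) := by
    calc ∏ i : Fin N, mgf (Y i) P (2 * α)
        ≤ ∏ _i : Fin N, Real.exp ((2 * α) ^ 2 * (2 * b) ^ 2 / 2) :=
          Finset.prod_le_prod (fun i _ => mgf_nonneg) (fun i _ => hmgf i)
      _ = Real.exp ((2 * α) ^ 2 * (2 * b) ^ 2 / 2 * N) := by
          rw [Finset.prod_const, ← Real.exp_nat_mul]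
          simp [mul_comm]
  have hkey : Real.exp (-(2 * α) * ((N : ℝ) * μ)) * Real.exp ((2 * α) ^ 2 * (2 * b) ^ 2 / 2 * N)
      ≤ Real.exp (-(α * μ + α ^ 2 * b ^ 2) * N) := by
    rw [← Real.exp_add, Real.exp_le_exp]
    have hα9 : α * (9 * b ^ 2) ≤ μ := by
      have : α ≤ μ / (9 * b ^ 2) := min_le_right _ _
      rw [le_div_iff₀ (by positivity)] at this
      exact this
    nlinarith [sq_nonneg α, hNpos, mul_le_mul_of_nonneg_left hα9 (le_of_lt (mul_pos hα_pos hNpos))]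
  have hfinal : (P {ω | (N : ℝ) * μ ≤ (∑ i, Y i) ω}).toReal ≤
      Real.exp (-(α * μ + α ^ 2 * b ^ 2) * N) := by
    refine hchern.trans (le_trans ?_ hkey)
    gcongr
  calc P {ω | (N : ℝ) * μ ≤ (∑ i, Y i) ω}
      = ENNReal.ofReal (P {ω | (N : ℝ) * μ ≤ (∑ i, Y i) ω}).toReal :=
        (ENNReal.ofReal_toReal (measure_ne_top _ _)).symm
    _ ≤ ENNReal.ofReal (Real.exp (-(α * μ + α ^ 2 * b ^ 2) * N)) :=
        ENNReal.ofReal_le_ofReal hfinal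
end

section
/- Let (Ω, 𝔉, P) be a probability space, S a finite set, b ∈ (0,∞), m ∈ ℝ, and f : S × Ω → ℝ a function such that for every s ∈ S the map f(s, ·) is measurable, takes values in [0, b], and satisfies E[f(s, ·)] ≤ m. Then for every μ > 0 there exists α with 0 < α ≤ min{1, (b/2)·e^{−2b}} such that for every positive integer K with |S|·exp( −(α·μ + α²·b²)·K ) < 1, there exist points ω_1, …, ω_K ∈ Ω such that for every s ∈ S one has (1/K)·Σ_{i=1}^K f(s, ω_i) ≤ m + μ. -/
open MeasureTheory ProbabilityTheory

lemma exp_le_quad {u : ℝ} (h0 : 0 ≤ u) (h1 : u ≤ 1) : Real.exp u ≤ 1 + u + u ^ 2 := by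
  have := Real.exp_bound' h0 h1 (n := 2) (by norm_num)
  simp [Finset.sum_range_succ] at this
  nlinarith [sq_nonneg u]

lemma mgf_le {Ω : Type*} [MeasurableSpace Ω] (P : Measure Ω) [IsProbabilityMeasure P]
    (b m β : ℝ) (X : Ω → ℝ) (hX : Measurable X) (hbdd : ∀ ω, X ω ∈ Set.Icc 0 b)
    (hm : (∫ ω, X ω ∂P) ≤ m) (hβ : 0 < β) (hβb : β * b ≤ 1) :
    (∫ ω, Real.exp (β * X ω) ∂P) ≤ Real.exp (β * m + β ^ 2 * b ^ 2) := by
  have hXint : Integrable X P := by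
    refine Integrable.mono' (integrable_const b) hX.aestronglyMeasurable ?_
    filter_upwards with ω
    rw [Real.norm_eq_abs, abs_of_nonneg (hbdd ω).1]; exact (hbdd ω).2
  have hpt : ∀ ω, Real.exp (β * X ω) ≤ 1 + β * X ω + β ^ 2 * b ^ 2 := by
    intro ω
    have h0 : 0 ≤ β * X ω := mul_nonneg hβ.le (hbdd ω).1
    have h1 : β * X ω ≤ 1 := le_trans (by nlinarith [(hbdd ω).2]) hβb
    have h2 := exp_le_quad h0 h1
    have h3 : X ω ^ 2 ≤ b ^ 2 := pow_le_pow_left₀ (hbdd ω).1 (hbdd ω).2 2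
    nlinarith [sq_nonneg β, mul_nonneg (sq_nonneg β) (sub_nonneg.2 h3)]
  have hint : Integrable (fun ω => Real.exp (β * X ω)) P := by
    refine Integrable.mono' (integrable_const (Real.exp (β * b)))
      ((Real.measurable_exp.comp (hX.const_mul β)).aestronglyMeasurable) ?_
    filter_upwards with ω
    rw [Real.norm_eq_abs, abs_of_nonneg (Real.exp_nonneg _)]
    exact Real.exp_le_exp.2 (by nlinarith [(hbdd ω).2, (hbdd ω).1])
  calc (∫ ω, Real.exp (β * X ω) ∂P)
      ≤ ∫ ω, (1 + β * X ω + β ^ 2 * b ^ 2) ∂P := by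
        have hqint : Integrable (fun ω => 1 + β * X ω + β ^ 2 * b ^ 2) P :=
          ((integrable_const (1:ℝ)).add (hXint.const_mul β)).add
            (integrable_const (β ^ 2 * b ^ 2))
        exact integral_mono hint hqint hpt
    _ = 1 + β * (∫ ω, X ω ∂P) + β ^ 2 * b ^ 2 := by
        rw [integral_add, integral_add, integral_const, integral_const_mul, integral_const]
        · simp
        · exact integrable_const _
        · exact hXint.const_mul β
        · exact (integrable_const (1:ℝ)).add (hXint.const_mul β)
        · exact integrable_const _
    _ ≤ 1 + (β * m + β ^ 2 * b ^ 2) := by nlinarith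
    _ ≤ Real.exp (β * m + β ^ 2 * b ^ 2) := by
        have := Real.add_one_le_exp (β * m + β ^ 2 * b ^ 2); linarith


/-- de-randomization / elimination step:
If `f s` is a `[0, b]`-valued measurable function with `E[f s] ≤ m` for every `s` in a
finite set `S`, then for every `μ > 0` there is `α` with `0 < α ≤ min {1, (b/2)·e^{-2b}}`
such that for every `K` with `|S|·exp(-(αμ + α²b²)·K) < 1` there exist sample points
`ω_1, …, ω_K` with `(1/K)·Σ_i f s ω_i ≤ m + μ` for every `s ∈ S`. -/
theorem stmt2
    {Ω : Type*} [MeasurableSpace Ω] (P : Measure Ω) [IsProbabilityMeasure P]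
    (S : Type*) [Fintype S]
    (b m : ℝ) (hb : 0 < b)
    (f : S → Ω → ℝ)
    (hmeas : ∀ s, Measurable (f s))
    (hbdd : ∀ s ω, f s ω ∈ Set.Icc 0 b)
    (hm : ∀ s, (∫ ω, f s ω ∂P) ≤ m) :
    ∀ μ : ℝ, 0 < μ →
      ∃ α : ℝ, 0 < α ∧ α ≤ min 1 (b / 2 * Real.exp (-2 * b)) ∧
        ∀ K : ℕ, 0 < K →
          (Fintype.card S : ℝ) * Real.exp (-(α * μ + α ^ 2 * b ^ 2) * K) < 1 →
          ∃ ω : Fin K → Ω, ∀ s : S, (1 / (K : ℝ)) * ∑ i, f s (ω i) ≤ m + μ := by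
  intro μ hμ
  have hb2 : (0:ℝ) < b ^ 2 := by positivity
  set c := min 1 (b / 2 * Real.exp (-2 * b)) with hc_def
  have hc : 0 < c := lt_min one_pos (by positivity)
  set β := min (1 / b) (μ / (2 * b ^ 2)) with hβ_def
  have hβ : 0 < β := lt_min (by positivity) (by positivity)
  set α := min (β / 3) c with hα_def
  have hα : 0 < α := lt_min (by positivity) hc
  refine ⟨α, hα, min_le_right _ _, ?_⟩
  intro K hK hcard
  have hβμ : β ≤ μ / (2 * b ^ 2) := min_le_right _ _
  have hαβ : α ≤ β / 3 := min_le_left _ _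
  have hkey : α * μ + α ^ 2 * b ^ 2 ≤ β * μ - β ^ 2 * b ^ 2 := by
    have hβμ' : β * (2 * b ^ 2) ≤ μ := (le_div_iff₀ (by positivity)).1 hβμ
    have hαμ' : α * (2 * b ^ 2) ≤ μ := by nlinarith
    have h1 : β ^ 2 * b ^ 2 ≤ β * μ / 2 := by nlinarith
    have h2 : α ^ 2 * b ^ 2 ≤ α * μ / 2 := by nlinarith
    nlinarith
  have hβb : β * b ≤ 1 := by
    have h := min_le_left (1 / b) (μ / (2 * b ^ 2))
    calc β * b ≤ (1 / b) * b := by nlinarith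
      _ = 1 := by field_simp
  letI : MeasureSpace Ω := ⟨P⟩
  haveI : IsProbabilityMeasure (volume : Measure Ω) := ‹IsProbabilityMeasure P›
  haveI hQprob : IsProbabilityMeasure (volume : Measure (Fin K → Ω)) := by
    rw [MeasureTheory.volume_pi]; infer_instance
  set E := Real.exp (-(α * μ + α ^ 2 * b ^ 2) * K) with hE_def
  have hmeasg : ∀ s, Measurable (fun ω : Fin K → Ω => ∑ i, f s (ω i)) := fun s =>
    Finset.measurable_sum _ fun i _ => (hmeas s).comp (measurable_pi_apply i)
  have hbound : ∀ s,
      (volume {ω : Fin K → Ω | (K:ℝ) * (m + μ) ≤ ∑ i, f s (ω i)}).toReal ≤ E := by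
    intro s
    have hint : Integrable (fun ω : Fin K → Ω => Real.exp (β * ∑ i, f s (ω i))) volume := by
      refine Integrable.mono' (integrable_const (Real.exp (β * ((K:ℝ) * b))))
        ((Real.measurable_exp.comp ((hmeasg s).const_mul β)).aestronglyMeasurable) ?_
      filter_upwards with ω
      rw [Real.norm_eq_abs, abs_of_nonneg (Real.exp_nonneg _)]
      apply Real.exp_le_exp.2
      have hsum : ∑ i, f s (ω i) ≤ (K:ℝ) * b := by
        calc ∑ i, f s (ω i) ≤ ∑ _i : Fin K, b :=
              Finset.sum_le_sum fun i _ => (hbdd s (ω i)).2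
          _ = (K:ℝ) * b := by simp [mul_comm]
      nlinarith
    have hch := measure_ge_le_exp_mul_mgf (μ := (volume : Measure (Fin K → Ω)))
      (X := fun ω => ∑ i, f s (ω i)) ((K:ℝ) * (m + μ)) hβ.le hint
    have hfact : mgf (fun ω : Fin K → Ω => ∑ i, f s (ω i)) volume β
        = (∫ x, Real.exp (β * f s x) ∂P) ^ K := by
      have hprod : ∀ ω : Fin K → Ω,
          Real.exp (β * ∑ i, f s (ω i)) = ∏ i, Real.exp (β * f s (ω i)) := by
        intro ω; rw [Finset.mul_sum, Real.exp_sum]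
      rw [mgf]
      simp_rw [hprod]
      have h2 := MeasureTheory.integral_fintype_prod_eq_pow (ι := Fin K) (μ := P)
        (fun x : Ω => Real.exp (β * f s x))
      rw [Fintype.card_fin] at h2
      exact h2
    have hmgf1 : (∫ x, Real.exp (β * f s x) ∂P) ≤ Real.exp (β * m + β ^ 2 * b ^ 2) :=
      mgf_le P b m β (f s) (hmeas s) (fun ω => hbdd s ω) (hm s) hβ hβb
    have hnn : (0:ℝ) ≤ ∫ x, Real.exp (β * f s x) ∂P :=
      integral_nonneg fun x => Real.exp_nonneg _
    calc (volume {ω : Fin K → Ω | (K:ℝ) * (m + μ) ≤ ∑ i, f s (ω i)}).toReal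
        ≤ Real.exp (-β * ((K:ℝ) * (m + μ)))
            * mgf (fun ω : Fin K → Ω => ∑ i, f s (ω i)) volume β := hch
      _ ≤ Real.exp (-β * ((K:ℝ) * (m + μ)))
            * Real.exp (β * m + β ^ 2 * b ^ 2) ^ K := by
          rw [hfact]
          exact mul_le_mul_of_nonneg_left (pow_le_pow_left₀ hnn hmgf1 K)
            (Real.exp_nonneg _)
      _ = Real.exp (-(β * μ - β ^ 2 * b ^ 2) * K) := by
          rw [← Real.exp_nat_mul, ← Real.exp_add]
          congr 1; ring
      _ ≤ E := by
          apply Real.exp_le_exp.2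
          exact mul_le_mul_of_nonneg_right (by linarith) (Nat.cast_nonneg K)
  have hQE : ∀ s, volume {ω : Fin K → Ω | (K:ℝ) * (m + μ) ≤ ∑ i, f s (ω i)}
      ≤ ENNReal.ofReal E := by
    intro s
    rw [← ENNReal.ofReal_toReal (measure_ne_top volume _)]
    exact ENNReal.ofReal_le_ofReal (hbound s)
  have hunion : volume (⋃ s : S, {ω : Fin K → Ω | (K:ℝ) * (m + μ) ≤ ∑ i, f s (ω i)}) < 1 := by
    calc volume (⋃ s : S, {ω : Fin K → Ω | (K:ℝ) * (m + μ) ≤ ∑ i, f s (ω i)})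
        ≤ ∑ s : S, volume {ω : Fin K → Ω | (K:ℝ) * (m + μ) ≤ ∑ i, f s (ω i)} :=
          measure_iUnion_fintype_le _ _
      _ ≤ ∑ _s : S, ENNReal.ofReal E := Finset.sum_le_sum fun s _ => hQE s
      _ = (Fintype.card S : ENNReal) * ENNReal.ofReal E := by
          rw [Finset.sum_const, Finset.card_univ, nsmul_eq_mul]
      _ = ENNReal.ofReal ((Fintype.card S : ℝ) * E) := by
          rw [ENNReal.ofReal_mul (by positivity), ENNReal.ofReal_natCast]
      _ < 1 := by
          rw [← ENNReal.ofReal_one]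
          exact (ENNReal.ofReal_lt_ofReal_iff one_pos).2 hcard
  have hne : (⋃ s : S, {ω : Fin K → Ω | (K:ℝ) * (m + μ) ≤ ∑ i, f s (ω i)}) ≠ Set.univ := by
    intro h
    rw [h, measure_univ] at hunion
    exact lt_irrefl _ hunion
  obtain ⟨ω, hω⟩ := (Set.ne_univ_iff_exists_notMem _).1 hne
  refine ⟨ω, fun s => ?_⟩
  have hlt : ¬ ((K:ℝ) * (m + μ) ≤ ∑ i, f s (ω i)) := fun h =>
    hω (Set.mem_iUnion.2 ⟨s, h⟩)
  push_neg at hlt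
  have hKpos : (0:ℝ) < K := Nat.cast_pos.2 hK
  calc (1 / (K:ℝ)) * ∑ i, f s (ω i)
      ≤ (1 / (K:ℝ)) * ((K:ℝ) * (m + μ)) :=
        mul_le_mul_of_nonneg_left hlt.le (by positivity)
    _ = m + μ := by field_simp
end

section
/- (Conditional typicality lemma.) Let 𝒮 and 𝒯 be finite alphabets, P_S a probability distribution on 𝒮, W : 𝒮 → 𝒫(𝒯) a channel (conditional probability distribution) with values W(t|s), and δ_0 ∈ (0, 1]. Let n be a positive integer, let s ∈ 𝒮^n satisfy ‖T_s − P_S‖_∞ ≤ δ_0, and let T = (T_1, …, T_n) be independent random variables with T_i distributed according to W(·|s_i). Then P( (s, T) ∈ T^n_{3δ_0}(P_S·W) ) ≥ 1 − 2·|𝒮|·|𝒯|·exp(−2nδ_0³), where (P_S·W)(a,t) := P_S(a)·W(t|a). -/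
open MeasureTheory ProbabilityTheory

/-- The type (empirical distribution) of a sequence `s ∈ 𝒮^n`:
`T_s(a) = (1/n)·|{i : s i = a}|`. -/
noncomputable def empDist {n : ℕ} {S : Type*} [DecidableEq S]
    (s : Fin n → S) (a : S) : ℝ :=
  (Finset.univ.filter (fun i => s i = a)).card / n

/-- The joint type of a pair of sequences `(s, t) ∈ 𝒮^n × 𝒯^n`:
`T_{s,t}(a,b) = (1/n)·|{i : (s i, t i) = (a, b)}|`. -/
noncomputable def empDist2 {n : ℕ} {S T : Type*} [DecidableEq S] [DecidableEq T]
    (s : Fin n → S) (t : Fin n → T) (a : S) (b : T) : ℝ :=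
  (Finset.univ.filter (fun i => s i = a ∧ t i = b)).card / n

lemma exp_le_one_add_add_sq {y : ℝ} (h : |y| ≤ 1) : Real.exp y ≤ 1 + y + y ^ 2 := by
  have h2 := Real.exp_bound h (n := 2) (by norm_num)
  have hs : ∑ m ∈ Finset.range 2, y ^ m / m.factorial = 1 + y := by
    simp [Finset.sum_range_succ]
  rw [hs] at h2
  have h3 : Real.exp y - (1 + y) ≤ |y| ^ 2 * (3 / (2 * 2)) := by
    have := abs_sub_le_iff.1 h2
    simpa [Nat.factorial] using this.1
  have h4 : |y| ^ 2 = y ^ 2 := sq_abs y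
  nlinarith [sq_nonneg y]

lemma factor_bound {p μ : ℝ} (hp0 : 0 ≤ p) (hp1 : p ≤ 1) (hμ : |μ| ≤ 1) :
    (1 - p) * Real.exp (-(μ * p)) + p * Real.exp (μ * (1 - p)) ≤ 1 + μ ^ 2 := by
  have h1 : |(-(μ * p))| ≤ 1 := by
    rw [abs_neg, abs_mul]
    calc |μ| * |p| ≤ 1 * 1 := by
          apply mul_le_mul hμ (by rwa [abs_of_nonneg hp0]) (abs_nonneg p) zero_le_one
      _ = 1 := by ring
  have h2 : |(μ * (1 - p))| ≤ 1 := by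
    rw [abs_mul]
    calc |μ| * |1 - p| ≤ 1 * 1 := by
          apply mul_le_mul hμ (by rw [abs_of_nonneg (by linarith)]; linarith)
            (abs_nonneg _) zero_le_one
      _ = 1 := by ring
  have e1 := exp_le_one_add_add_sq h1
  have e2 := exp_le_one_add_add_sq h2
  have hp1' : 0 ≤ 1 - p := by linarith
  nlinarith [sq_nonneg μ, sq_nonneg (μ * p), sq_nonneg (μ * (1 - p)),
    mul_nonneg hp0 hp1', sq_nonneg (1 - p), mul_le_mul_of_nonneg_left e1 hp1',
    mul_le_mul_of_nonneg_left e2 hp0]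

open Finset in
lemma chernoff_tail {n : ℕ} {𝒯 : Type*} [Fintype 𝒯] [DecidableEq 𝒯]
    (q : Fin n → 𝒯 → ℝ) (hq0 : ∀ i b, 0 ≤ q i b) (hq1 : ∀ i, ∑ b, q i b = 1)
    (A : Finset (Fin n)) (t : 𝒯) (p : ℝ) (hp0 : 0 ≤ p) (hp1 : p ≤ 1)
    (hp : ∀ i ∈ A, q i t = p)
    (ε : ℝ) (hε : ε = 1 ∨ ε = -1) (lam u : ℝ) (hlam0 : 0 ≤ lam) (hlam1 : lam ≤ 1) :
    ∑ v ∈ univ.filter (fun v : Fin n → 𝒯 =>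
        u ≤ ε * (((A.filter (fun i => v i = t)).card : ℝ) - A.card * p)),
      ∏ i, q i (v i)
    ≤ Real.exp (lam ^ 2 * A.card - lam * u) := by
  classical
  have hεabs : |ε| = 1 := by rcases hε with h | h <;> simp [h]
  set c : (Fin n → 𝒯) → ℝ := fun v => ((A.filter (fun i => v i = t)).card : ℝ) with hc
  -- c v as a sum of indicators
  have hcsum : ∀ v, c v = ∑ i ∈ A, (if v i = t then (1:ℝ) else 0) := by
    intro v
    have h : ((A.filter (fun i => v i = t)).card : ℝ) = ∑ i ∈ A, if v i = t then (1:ℝ) else 0 := by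
      rw [Finset.card_filter]
      push_cast
      rfl
    exact h
  -- step 1: bound each term by exp weight times term, extend to univ
  have step1 : ∑ v ∈ univ.filter (fun v : Fin n → 𝒯 =>
        u ≤ ε * (c v - A.card * p)), ∏ i, q i (v i)
      ≤ ∑ v : Fin n → 𝒯, Real.exp (lam * (ε * (c v - A.card * p) - u)) * ∏ i, q i (v i) := by
    have h1 : ∀ v ∈ univ.filter (fun v : Fin n → 𝒯 => u ≤ ε * (c v - A.card * p)),
        ∏ i, q i (v i) ≤ Real.exp (lam * (ε * (c v - A.card * p) - u)) * ∏ i, q i (v i) := by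
      intro v hv
      rw [mem_filter] at hv
      have h2 : (1:ℝ) ≤ Real.exp (lam * (ε * (c v - A.card * p) - u)) := by
        rw [← Real.exp_zero]
        apply Real.exp_le_exp.2
        have := hv.2
        nlinarith
      nlinarith [Finset.prod_nonneg (fun i (_ : i ∈ univ) => hq0 i (v i)), h2]
    calc ∑ v ∈ univ.filter (fun v : Fin n → 𝒯 => u ≤ ε * (c v - A.card * p)), ∏ i, q i (v i)
        ≤ ∑ v ∈ univ.filter (fun v : Fin n → 𝒯 => u ≤ ε * (c v - A.card * p)),
            Real.exp (lam * (ε * (c v - A.card * p) - u)) * ∏ i, q i (v i) :=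
          Finset.sum_le_sum h1
      _ ≤ ∑ v : Fin n → 𝒯, Real.exp (lam * (ε * (c v - A.card * p) - u)) * ∏ i, q i (v i) :=
          Finset.sum_le_sum_of_subset_of_nonneg (filter_subset _ _) (fun v _ _ =>
            mul_nonneg (Real.exp_nonneg _) (Finset.prod_nonneg fun i _ => hq0 i (v i)))
  -- step 2: factorize
  set F : Fin n → 𝒯 → ℝ := fun i b =>
    q i b * (if i ∈ A then Real.exp (lam * ε * ((if b = t then (1:ℝ) else 0) - p)) else 1)
    with hF
  have step2 : ∀ v : Fin n → 𝒯,
      Real.exp (lam * (ε * (c v - A.card * p) - u)) * ∏ i, q i (v i)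
      = Real.exp (-(lam * u)) * ∏ i, F i (v i) := by
    intro v
    have hprod : ∏ i, F i (v i) =
        (∏ i, q i (v i)) * ∏ i ∈ A, Real.exp (lam * ε * ((if v i = t then (1:ℝ) else 0) - p)) := by
      rw [hF, Finset.prod_mul_distrib]
      congr 1
      exact Fintype.prod_ite_mem A _
    rw [hprod, ← Real.exp_sum]
    have : ∑ i ∈ A, lam * ε * ((if v i = t then (1:ℝ) else 0) - p)
        = lam * ε * (c v - A.card * p) := by
      rw [← Finset.mul_sum, Finset.sum_sub_distrib, ← hcsum, Finset.sum_const, nsmul_eq_mul]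
    rw [this]
    rw [show lam * (ε * (c v - (A.card : ℝ) * p) - u)
        = -(lam * u) + lam * ε * (c v - (A.card : ℝ) * p) by ring, Real.exp_add]
    ring
  rw [Finset.sum_congr rfl (fun v _ => step2 v), ← Finset.mul_sum] at step1
  -- step 3: sum-product exchange
  have step3 : ∑ v : Fin n → 𝒯, ∏ i, F i (v i) = ∏ i, ∑ b, F i b :=
    (Fintype.prod_sum F).symm
  rw [step3] at step1
  -- step 4: bound each factor
  have hfac : ∀ i, ∑ b, F i b ≤ if i ∈ A then Real.exp (lam ^ 2) else 1 := by
    intro i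
    by_cases hi : i ∈ A
    · simp only [hF, hi, if_true]
      have hsplit : ∑ b, q i b * Real.exp (lam * ε * ((if b = t then (1:ℝ) else 0) - p))
          = (1 - p) * Real.exp (-(lam * ε * p)) + p * Real.exp (lam * ε * (1 - p)) := by
        rw [← Finset.sum_filter_add_sum_filter_not univ (fun b => b = t)]
        have h1 : univ.filter (fun b : 𝒯 => b = t) = {t} := by
          ext b; simp
        rw [h1]
        have h2 : ∑ b ∈ univ.filter (fun b : 𝒯 => ¬ b = t), q i b
            * Real.exp (lam * ε * ((if b = t then (1:ℝ) else 0) - p))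
            = (1 - p) * Real.exp (-(lam * ε * p)) := by
          have hcong : ∑ b ∈ univ.filter (fun b : 𝒯 => ¬ b = t), q i b
              * Real.exp (lam * ε * ((if b = t then (1:ℝ) else 0) - p))
              = ∑ b ∈ univ.filter (fun b : 𝒯 => ¬ b = t), q i b * Real.exp (-(lam * ε * p)) := by
            apply Finset.sum_congr rfl
            intro b hb
            rw [mem_filter] at hb
            rw [if_neg hb.2, show lam * ε * ((0:ℝ) - p) = -(lam * ε * p) by ring]
          rw [hcong, ← Finset.sum_mul]
          congr 1
          have := hq1 i
          rw [← Finset.sum_filter_add_sum_filter_not univ (fun b => b = t), h1] at this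
          simp only [Finset.sum_singleton] at this
          rw [hp i hi] at this
          linarith
        rw [h2, Finset.sum_singleton, if_pos rfl, hp i hi]
        ring
      rw [hsplit]
      have hb := factor_bound hp0 hp1 (μ := lam * ε)
        (by rw [abs_mul, hεabs, mul_one, abs_of_nonneg hlam0]; exact hlam1)
      have h3 : (1:ℝ) + (lam * ε) ^ 2 ≤ Real.exp (lam ^ 2) := by
        have h4 : (lam * ε) ^ 2 = lam ^ 2 := by
          rw [mul_pow]
          rcases hε with h | h <;> simp [h]
        rw [h4]
        linarith [Real.add_one_le_exp (lam ^ 2)]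
      linarith [hb]
    · simp only [hF, hi, if_false, mul_one]
      rw [hq1 i]
  have hfacnn : ∀ i, 0 ≤ ∑ b, F i b := by
    intro i
    apply Finset.sum_nonneg
    intro b _
    exact mul_nonneg (hq0 i b) (by positivity)
  have step4 : ∏ i, ∑ b, F i b ≤ Real.exp (lam ^ 2 * A.card) := by
    calc ∏ i, ∑ b, F i b ≤ ∏ i, (if i ∈ A then Real.exp (lam ^ 2) else 1) :=
          Finset.prod_le_prod (fun i _ => hfacnn i) (fun i _ => hfac i)
      _ = Real.exp (lam ^ 2) ^ A.card := by
          rw [Fintype.prod_ite_mem A (fun _ => Real.exp (lam ^ 2)), Finset.prod_const]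
      _ = Real.exp (lam ^ 2 * A.card) := by
          rw [← Real.exp_nat_mul]; ring_nf
  calc ∑ v ∈ univ.filter (fun v : Fin n → 𝒯 =>
        u ≤ ε * (c v - A.card * p)), ∏ i, q i (v i)
      ≤ Real.exp (-(lam * u)) * ∏ i, ∑ b, F i b := step1
    _ ≤ Real.exp (-(lam * u)) * Real.exp (lam ^ 2 * A.card) := by
        apply mul_le_mul_of_nonneg_left step4 (Real.exp_nonneg _)
    _ = Real.exp (lam ^ 2 * A.card - lam * u) := by
        rw [← Real.exp_add]; ring_nf

open Finset in
lemma real_main {n : ℕ} (hn : 0 < n) {𝒮 𝒯 : Type*} [Fintype 𝒮] [DecidableEq 𝒮]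
    [Fintype 𝒯] [DecidableEq 𝒯]
    (PS : 𝒮 → ℝ) (hPS0 : ∀ a, 0 ≤ PS a) (hPS1 : ∑ a, PS a = 1)
    (W : 𝒮 → 𝒯 → ℝ) (hW0 : ∀ a t, 0 ≤ W a t) (hW1 : ∀ a, ∑ t, W a t = 1)
    (δ0 : ℝ) (hδ0 : 0 < δ0) (hδ03 : δ0 < 1/3)
    (s : Fin n → 𝒮) (hs : ∀ a : 𝒮, |empDist s a - PS a| ≤ δ0) :
    1 - 2 * (Fintype.card 𝒮 : ℝ) * (Fintype.card 𝒯 : ℝ) * Real.exp (-2 * n * δ0 ^ 3)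
      ≤ ∑ v ∈ Finset.univ.filter (fun v : Fin n → 𝒯 =>
          ∀ a t, |empDist2 s v a t - PS a * W a t| ≤ 3 * δ0), ∏ i, W (s i) (v i) := by
  classical
  set Good : (Fin n → 𝒯) → Prop := fun v => ∀ a t, |empDist2 s v a t - PS a * W a t| ≤ 3 * δ0
    with hGood
  have hprodnn : ∀ v : Fin n → 𝒯, 0 ≤ ∏ i, W (s i) (v i) := fun v =>
    Finset.prod_nonneg fun i _ => hW0 _ _
  -- total mass is 1
  have htotal : ∑ v : Fin n → 𝒯, ∏ i, W (s i) (v i) = 1 := by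
    rw [← Fintype.prod_sum (fun i b => W (s i) b)]
    rw [Finset.prod_congr rfl (fun i _ => hW1 (s i))]
    simp
  have hsplit := Finset.sum_filter_add_sum_filter_not univ Good (fun v => ∏ i, W (s i) (v i))
  -- it suffices to bound the bad part
  suffices hbad : ∑ v ∈ univ.filter (fun v => ¬ Good v), ∏ i, W (s i) (v i)
      ≤ 2 * (Fintype.card 𝒮 : ℝ) * (Fintype.card 𝒯 : ℝ) * Real.exp (-2 * n * δ0 ^ 3) by
    have := hsplit
    rw [htotal] at this
    linarith
  -- per-pair tail bound
  have hpair : ∀ a : 𝒮, ∀ t : 𝒯,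
      ∑ v ∈ univ.filter (fun v : Fin n → 𝒯 => 3 * δ0 < |empDist2 s v a t - PS a * W a t|),
        ∏ i, W (s i) (v i) ≤ 2 * Real.exp (-2 * n * δ0 ^ 3) := by
    intro a t
    set A : Finset (Fin n) := univ.filter (fun i => s i = a) with hA
    set p : ℝ := W a t with hpdef
    have hp0 : 0 ≤ p := hW0 a t
    have hp1 : p ≤ 1 := by
      have := Finset.single_le_sum (f := fun b => W a b) (fun b _ => hW0 a b) (mem_univ t)
      rw [hW1 a] at this
      exact this
    have hPa1 : PS a ≤ 1 := by
      have := Finset.single_le_sum (f := PS) (fun b _ => hPS0 b) (mem_univ a)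
      rw [hPS1] at this
      exact this
    have hmn : (A.card : ℝ) ≤ n := by
      have := Finset.card_filter_le univ (fun i => s i = a)
      rw [Finset.card_univ, Fintype.card_fin] at this
      exact_mod_cast this
    have hq : ∀ i ∈ A, W (s i) t = p := by
      intro i hi
      rw [hA, mem_filter] at hi
      rw [hi.2]
    -- the empirical count
    have hE2 : ∀ v : Fin n → 𝒯, empDist2 s v a t = ((A.filter (fun i => v i = t)).card : ℝ) / n := by
      intro v
      rw [empDist2, hA, Finset.filter_filter]
    have hED : empDist s a = (A.card : ℝ) / n := by rw [empDist, hA]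
    -- Bad implies in one of two tails
    have hsub : univ.filter (fun v : Fin n → 𝒯 => 3 * δ0 < |empDist2 s v a t - PS a * W a t|)
        ⊆ (univ.filter (fun v : Fin n → 𝒯 =>
            2 * n * δ0 ≤ (1:ℝ) * (((A.filter (fun i => v i = t)).card : ℝ) - A.card * p)))
          ∪ (univ.filter (fun v : Fin n → 𝒯 =>
            2 * n * δ0 ≤ (-1:ℝ) * (((A.filter (fun i => v i = t)).card : ℝ) - A.card * p))) := by
      intro v hv
      rw [mem_filter] at hv
      have hv2 := hv.2
      rw [hE2 v] at hv2
      set c : ℝ := ((A.filter (fun i => v i = t)).card : ℝ) with hcdef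
      have hn' : (0:ℝ) < n := by exact_mod_cast hn
      have hsa := hs a
      rw [hED] at hsa
      -- |c - A.card * p| ≥ 2 n δ0
      have hkey : 2 * n * δ0 ≤ |c - A.card * p| := by
        have h1 : 2 * δ0 < |c / n - (A.card : ℝ) / n * p| := by
          have h2 : |(A.card : ℝ) / n * p - PS a * p| ≤ δ0 * p := by
            rw [← sub_mul, abs_mul, abs_of_nonneg hp0]
            exact mul_le_mul_of_nonneg_right hsa hp0
          have h3 := abs_sub_abs_le_abs_sub (c / n - PS a * p) ((A.card : ℝ) / n * p - PS a * p)
          have h4 : c / n - PS a * p - ((A.card : ℝ) / n * p - PS a * p)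
              = c / n - (A.card : ℝ) / n * p := by ring
          rw [h4] at h3
          have hδp : δ0 * p ≤ δ0 := by nlinarith
          calc 2 * δ0 = 3 * δ0 - δ0 := by ring
            _ < |c / n - PS a * p| - δ0 * p := by
                have : δ0 * p ≤ δ0 := hδp
                linarith [hv2]
            _ ≤ |c / n - (A.card : ℝ) / n * p| := by linarith [h3, abs_nonneg (c / n - (A.card:ℝ)/n*p)]
        have h5 : |c / n - (A.card : ℝ) / n * p| = |c - (A.card : ℝ) * p| / n := by
          rw [← abs_of_pos hn', ← abs_div]
          congr 1
          field_simp
          rw [abs_of_pos hn']; ring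
        rw [h5] at h1
        rw [lt_div_iff₀ hn'] at h1
        calc 2 * n * δ0 = 2 * δ0 * n := by ring
          _ ≤ |c - (A.card : ℝ) * p| := le_of_lt h1
      rcases abs_cases (c - A.card * p) with ⟨heq, _⟩ | ⟨heq, _⟩
      · apply Finset.mem_union_left
        rw [mem_filter]
        refine ⟨mem_univ _, ?_⟩
        rw [one_mul]
        rw [heq] at hkey
        exact hkey
      · apply Finset.mem_union_right
        rw [mem_filter]
        refine ⟨mem_univ _, ?_⟩
        rw [heq] at hkey
        linarith
    -- each tail is bounded
    have htail : ∀ ε : ℝ, ε = 1 ∨ ε = -1 →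
        ∑ v ∈ univ.filter (fun v : Fin n → 𝒯 =>
          2 * n * δ0 ≤ ε * (((A.filter (fun i => v i = t)).card : ℝ) - A.card * p)),
          ∏ i, W (s i) (v i) ≤ Real.exp (-2 * n * δ0 ^ 3) := by
      intro ε hε
      have h := chernoff_tail (fun i => W (s i)) (fun i b => hW0 _ _) (fun i => hW1 _)
        A t p hp0 hp1 hq ε hε δ0 (2 * n * δ0) (le_of_lt hδ0) (by linarith)
      refine h.trans ?_
      apply Real.exp_le_exp.2
      nlinarith [mul_le_mul_of_nonneg_left hmn (sq_nonneg δ0),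
        mul_nonneg (mul_nonneg (Nat.cast_nonneg n : (0:ℝ) ≤ n) (sq_nonneg δ0))
          (by linarith : (0:ℝ) ≤ 1 - 2 * δ0)]
    -- combine the two tails
    have hU := htail 1 (Or.inl rfl)
    have hL := htail (-1) (Or.inr rfl)
    set S1 : Finset (Fin n → 𝒯) := univ.filter (fun v : Fin n → 𝒯 =>
        2 * n * δ0 ≤ (1:ℝ) * (((A.filter (fun i => v i = t)).card : ℝ) - A.card * p)) with hS1
    set S2 : Finset (Fin n → 𝒯) := univ.filter (fun v : Fin n → 𝒯 =>
        2 * n * δ0 ≤ (-1:ℝ) * (((A.filter (fun i => v i = t)).card : ℝ) - A.card * p)) with hS2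
    have hui : ((∑ v ∈ S1 ∪ S2, ∏ i, W (s i) (v i)) + ∑ v ∈ S1 ∩ S2, ∏ i, W (s i) (v i))
        = (∑ v ∈ S1, ∏ i, W (s i) (v i)) + ∑ v ∈ S2, ∏ i, W (s i) (v i) :=
      Finset.sum_union_inter
    have hint : 0 ≤ ∑ v ∈ S1 ∩ S2, ∏ i, W (s i) (v i) := Finset.sum_nonneg fun v _ => hprodnn v
    have hmain : ∑ v ∈ univ.filter
          (fun v : Fin n → 𝒯 => 3 * δ0 < |empDist2 s v a t - PS a * W a t|),
          ∏ i, W (s i) (v i) ≤ ∑ v ∈ S1 ∪ S2, ∏ i, W (s i) (v i) :=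
      Finset.sum_le_sum_of_subset_of_nonneg hsub (fun v _ _ => hprodnn v)
    linarith [hU, hL, hui, hint, hmain]
  -- union bound
  have hub : ∑ v ∈ univ.filter (fun v => ¬ Good v), ∏ i, W (s i) (v i)
      ≤ ∑ x : 𝒮 × 𝒯, ∑ v ∈ univ.filter (fun v : Fin n → 𝒯 =>
          3 * δ0 < |empDist2 s v x.1 x.2 - PS x.1 * W x.1 x.2|), ∏ i, W (s i) (v i) := by
    have h1 : ∀ v ∈ univ.filter (fun v => ¬ Good v), ∏ i, W (s i) (v i)
        ≤ ∑ x : 𝒮 × 𝒯, (if 3 * δ0 < |empDist2 s v x.1 x.2 - PS x.1 * W x.1 x.2|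
            then ∏ i, W (s i) (v i) else 0) := by
      intro v hv
      rw [mem_filter] at hv
      have hv2 : ¬ ∀ (a : 𝒮) (t : 𝒯), |empDist2 s v a t - PS a * W a t| ≤ 3 * δ0 := hv.2
      push_neg at hv2
      obtain ⟨a, t, hat⟩ := hv2
      have := Finset.single_le_sum (f := fun x : 𝒮 × 𝒯 =>
          if 3 * δ0 < |empDist2 s v x.1 x.2 - PS x.1 * W x.1 x.2| then ∏ i, W (s i) (v i) else 0)
        (fun x _ => by split_ifs; exacts [hprodnn v, le_rfl]) (mem_univ (a, t))
      simpa [if_pos hat] using this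
    calc ∑ v ∈ univ.filter (fun v => ¬ Good v), ∏ i, W (s i) (v i)
        ≤ ∑ v ∈ univ.filter (fun v => ¬ Good v), ∑ x : 𝒮 × 𝒯,
            (if 3 * δ0 < |empDist2 s v x.1 x.2 - PS x.1 * W x.1 x.2|
              then ∏ i, W (s i) (v i) else 0) := Finset.sum_le_sum h1
      _ ≤ ∑ v : Fin n → 𝒯, ∑ x : 𝒮 × 𝒯,
            (if 3 * δ0 < |empDist2 s v x.1 x.2 - PS x.1 * W x.1 x.2|
              then ∏ i, W (s i) (v i) else 0) :=
          Finset.sum_le_sum_of_subset_of_nonneg (filter_subset _ _)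
            (fun v _ _ => Finset.sum_nonneg fun x _ => by
              split_ifs; exacts [hprodnn v, le_rfl])
      _ = ∑ x : 𝒮 × 𝒯, ∑ v : Fin n → 𝒯,
            (if 3 * δ0 < |empDist2 s v x.1 x.2 - PS x.1 * W x.1 x.2|
              then ∏ i, W (s i) (v i) else 0) := Finset.sum_comm
      _ = ∑ x : 𝒮 × 𝒯, ∑ v ∈ univ.filter (fun v : Fin n → 𝒯 =>
            3 * δ0 < |empDist2 s v x.1 x.2 - PS x.1 * W x.1 x.2|), ∏ i, W (s i) (v i) := by
          refine Finset.sum_congr rfl fun x _ => ?_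
          rw [Finset.sum_filter]
  refine hub.trans ?_
  calc ∑ x : 𝒮 × 𝒯, ∑ v ∈ univ.filter (fun v : Fin n → 𝒯 =>
          3 * δ0 < |empDist2 s v x.1 x.2 - PS x.1 * W x.1 x.2|), ∏ i, W (s i) (v i)
      ≤ ∑ _x : 𝒮 × 𝒯, 2 * Real.exp (-2 * n * δ0 ^ 3) :=
        Finset.sum_le_sum fun x _ => hpair x.1 x.2
    _ = 2 * (Fintype.card 𝒮 : ℝ) * (Fintype.card 𝒯 : ℝ) * Real.exp (-2 * n * δ0 ^ 3) := by
        rw [Finset.sum_const, Finset.card_univ, Fintype.card_prod, nsmul_eq_mul]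
        push_cast
        ring

/-- Conditional typicality lemma: if `s ∈ T^n_{δ₀}(P_S)` and
`T = (T_1, …, T_n)` are independent with `T_i ~ W(·|s_i)`, then
`P((s, T) ∈ T^n_{3δ₀}(P_S·W)) ≥ 1 - 2·|𝒮|·|𝒯|·exp(-2nδ₀³)`. -/
theorem stmt5
    {Ω : Type*} [MeasurableSpace Ω] (P : Measure Ω) [IsProbabilityMeasure P]
    {𝒮 𝒯 : Type*} [Fintype 𝒮] [DecidableEq 𝒮] [Fintype 𝒯] [DecidableEq 𝒯]
    [MeasurableSpace 𝒯] [MeasurableSingletonClass 𝒯]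
    (PS : 𝒮 → ℝ) (hPS0 : ∀ a, 0 ≤ PS a) (hPS1 : ∑ a, PS a = 1)
    (W : 𝒮 → 𝒯 → ℝ) (hW0 : ∀ a t, 0 ≤ W a t) (hW1 : ∀ a, ∑ t, W a t = 1)
    (δ0 : ℝ) (hδ0 : 0 < δ0) (hδ0' : δ0 ≤ 1)
    (n : ℕ) (hn : 0 < n)
    (s : Fin n → 𝒮) (hs : ∀ a : 𝒮, |empDist s a - PS a| ≤ δ0)
    (T : Fin n → Ω → 𝒯)
    (hmeas : ∀ i, Measurable (T i))
    (hindep : iIndepFun T P)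
    (hlaw : ∀ i t, P {ω | T i ω = t} = ENNReal.ofReal (W (s i) t)) :
    ENNReal.ofReal
        (1 - 2 * (Fintype.card 𝒮 : ℝ) * (Fintype.card 𝒯 : ℝ) * Real.exp (-2 * n * δ0 ^ 3)) ≤
      P {ω | ∀ (a : 𝒮) (t : 𝒯),
        |empDist2 s (fun i => T i ω) a t - PS a * W a t| ≤ 3 * δ0} := by
  classical
  by_cases hcase : δ0 < 1/3
  · -- main case
    have key := real_main hn PS hPS0 hPS1 W hW0 hW1 δ0 hδ0 hcase s hs
    set G : Finset (Fin n → 𝒯) := Finset.univ.filter (fun v : Fin n → 𝒯 =>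
      ∀ a t, |empDist2 s v a t - PS a * W a t| ≤ 3 * δ0) with hG
    have hsetE : {ω | ∀ (a : 𝒮) (t : 𝒯),
          |empDist2 s (fun i => T i ω) a t - PS a * W a t| ≤ 3 * δ0}
        = ⋃ v ∈ G, ⋂ i, T i ⁻¹' {v i} := by
      ext ω
      simp only [Set.mem_setOf_eq, Set.mem_iUnion, Set.mem_iInter, Set.mem_preimage,
        Set.mem_singleton_iff, hG, Finset.mem_filter, Finset.mem_univ, true_and]
      constructor
      · intro h
        exact ⟨fun i => T i ω, h, fun i => rfl⟩
      · rintro ⟨v, hv, hω⟩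
        have hvv : (fun i => T i ω) = v := funext hω
        rw [hvv]
        exact hv
    have hPv : ∀ v : Fin n → 𝒯,
        P (⋂ i, T i ⁻¹' {v i}) = ENNReal.ofReal (∏ i, W (s i) (v i)) := by
      intro v
      have h1 : (⋂ i, T i ⁻¹' {v i}) = ⋂ i ∈ (Finset.univ : Finset (Fin n)), T i ⁻¹' {v i} := by
        simp
      rw [h1, hindep.measure_inter_preimage_eq_mul Finset.univ
        (sets := fun i => {v i}) (fun i _ => measurableSet_singleton (v i))]
      have h2 : ∀ i, P (T i ⁻¹' {v i}) = ENNReal.ofReal (W (s i) (v i)) := by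
        intro i
        have h3 : T i ⁻¹' {v i} = {ω | T i ω = v i} := by ext ω; simp
        rw [h3, hlaw i (v i)]
      rw [Finset.prod_congr rfl (fun i _ => h2 i)]
      exact (ENNReal.ofReal_prod_of_nonneg (fun i _ => hW0 (s i) (v i))).symm
    have hdisj : (↑G : Set (Fin n → 𝒯)).PairwiseDisjoint (fun v => ⋂ i, T i ⁻¹' {v i}) := by
      intro v _ w _ hvw
      refine Set.disjoint_left.2 fun {ω} hv hw => hvw ?_
      simp only [Set.mem_iInter, Set.mem_preimage, Set.mem_singleton_iff] at hv hw
      exact funext fun i => (hv i).symm.trans (hw i)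
    rw [hsetE, measure_biUnion_finset hdisj
      (fun v _ => MeasurableSet.iInter fun i => (hmeas i) (measurableSet_singleton (v i)))]
    rw [Finset.sum_congr rfl (fun v _ => hPv v)]
    rw [← ENNReal.ofReal_sum_of_nonneg (fun v _ => Finset.prod_nonneg fun i _ => hW0 _ _)]
    exact ENNReal.ofReal_le_ofReal key
  · -- trivial case: δ0 ≥ 1/3
    have h13 : 1/3 ≤ δ0 := not_lt.1 hcase
    have hset : {ω | ∀ (a : 𝒮) (t : 𝒯),
        |empDist2 s (fun i => T i ω) a t - PS a * W a t| ≤ 3 * δ0} = Set.univ := by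
      ext ω
      simp only [Set.mem_setOf_eq, Set.mem_univ, iff_true]
      intro a t
      have hn' : (0:ℝ) < n := by exact_mod_cast hn
      have h1 : 0 ≤ empDist2 s (fun i => T i ω) a t := by
        rw [empDist2]; positivity
      have h2 : empDist2 s (fun i => T i ω) a t ≤ 1 := by
        rw [empDist2, div_le_one hn']
        have := Finset.card_filter_le Finset.univ
          (fun i => s i = a ∧ T i ω = t)
        rw [Finset.card_univ, Fintype.card_fin] at this
        exact_mod_cast this
      have hPa1 : PS a ≤ 1 := by
        have := Finset.single_le_sum (f := PS) (fun b _ => hPS0 b) (Finset.mem_univ a)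
        rw [hPS1] at this; exact this
      have hWat1 : W a t ≤ 1 := by
        have := Finset.single_le_sum (f := fun b => W a b) (fun b _ => hW0 a b)
          (Finset.mem_univ t)
        rw [hW1 a] at this; exact this
      have hm0 : 0 ≤ PS a * W a t := mul_nonneg (hPS0 a) (hW0 a t)
      have hm1 : PS a * W a t ≤ 1 := by nlinarith [hPS0 a, hW0 a t]
      rw [abs_le]
      constructor <;> nlinarith
    rw [hset, measure_univ]
    apply ENNReal.ofReal_le_one.2
    have hx : 0 ≤ 2 * (Fintype.card 𝒮 : ℝ) * (Fintype.card 𝒯 : ℝ)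
        * Real.exp (-2 * n * δ0 ^ 3) := by positivity
    linarith
end
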